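/- (Proposition on Diag) Let M be an (A,A)-bimodule, let c: M → A^{Hom^A_A(M,A)} be the canonical homomorphism c(m) = (ω(m))_{ω ∈ Hom^A_A(M,A)}, and let Diag(M) be the image of c, a diagonal bimodule. Then for every bimodule homomorphism φ: M → N into a diagonal bimodule N there exists a unique bimodule homomorphism Diag(φ): Diag(M) → N such that φ = Diag(φ) ∘ c. -/

import Mathlib

set_option maxHeartbeats 1000000
set_option synthInstance.maxHeartbeats 400000

open TensorProduct MulOpposite

universe uK uA uM uN

section Diag
variable (K : Type uK) (A : Type uA) [CommRing K] [Ring A] [Algebra K A]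

/-- `A` as a bimodule over itself (a bimodule is a module over `A ⊗[K] Aᵐᵒᵖ`). -/
noncomputable def bimoduleBA : Module (A ⊗[K] Aᵐᵒᵖ) A := TensorProduct.Algebra.module

attribute [local instance] bimoduleBA

/-- A bimodule is *diagonal* if there is an injective bimodule homomorphism `M → A^ι`
for some index set `ι`. -/
def IsDiagonalBimodule (M : Type uM) [AddCommGroup M] [Module (A ⊗[K] Aᵐᵒᵖ) M] : Prop :=
  ∃ (ι : Type (max uA uM)) (f : M →ₗ[A ⊗[K] Aᵐᵒᵖ] (ι → A)), Function.Injective f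

variable (M : Type uM) [AddCommGroup M] [Module (A ⊗[K] Aᵐᵒᵖ) M]

/-- The canonical bimodule homomorphism `c : M → A^{Hom(M,A)}`, `c m = (ω m)_ω`, where
`Hom(M,A)` is the set of bimodule homomorphisms `M → A`. -/
noncomputable def cMap : M →ₗ[A ⊗[K] Aᵐᵒᵖ] ((M →ₗ[A ⊗[K] Aᵐᵒᵖ] A) → A) :=
  LinearMap.pi fun ω => ω

/-- `Diag(M)`: the image of the canonical map `c : M → A^{Hom(M,A)}`, a diagonal
bimodule. -/
noncomputable def diagSub : Submodule (A ⊗[K] Aᵐᵒᵖ) ((M →ₗ[A ⊗[K] Aᵐᵒᵖ] A) → A) :=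
  LinearMap.range (cMap K A M)

/-- For every bimodule homomorphism `φ : M → N` into a diagonal bimodule `N`, there is a
unique bimodule homomorphism `Diag(φ) : Diag(M) → N` with `φ = Diag(φ) ∘ c`. -/
theorem diag_universal_property
    (N : Type uN) [AddCommGroup N] [Module (A ⊗[K] Aᵐᵒᵖ) N]
    (hN : IsDiagonalBimodule K A N) (φ : M →ₗ[A ⊗[K] Aᵐᵒᵖ] N) :
    ∃! ψ : (diagSub K A M) →ₗ[A ⊗[K] Aᵐᵒᵖ] N,
      φ = ψ ∘ₗ (cMap K A M).rangeRestrict := by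
  obtain ⟨ι, f, hf⟩ := hN
  have hker : LinearMap.ker (cMap K A M) ≤ LinearMap.ker φ := by
    intro m hm
    have hm' : ∀ ω : M →ₗ[A ⊗[K] Aᵐᵒᵖ] A, ω m = 0 := by
      intro ω
      have := congrFun (show cMap K A M m = 0 from hm) ω
      simpa [cMap] using this
    have : f (φ m) = f 0 := by
      ext i
      have := hm' ((LinearMap.proj i).comp (f.comp φ))
      simpa using this
    simpa [LinearMap.mem_ker] using hf this
  have h1 : ∀ m : M, (cMap K A M).quotKerEquivRange.symm ((cMap K A M).rangeRestrict m)
      = Submodule.Quotient.mk m := by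
    intro m
    apply (cMap K A M).quotKerEquivRange.injective
    apply Subtype.ext
    simp [LinearMap.quotKerEquivRange_apply_mk, LinearMap.rangeRestrict]
  refine ⟨((LinearMap.ker (cMap K A M)).liftQ φ hker) ∘ₗ
      ((cMap K A M).quotKerEquivRange.symm.toLinearMap :
        ↥(diagSub K A M) →ₗ[A ⊗[K] Aᵐᵒᵖ] _), ?_, ?_⟩
  · ext m
    show φ m = (LinearMap.ker (cMap K A M)).liftQ φ hker
      ((cMap K A M).quotKerEquivRange.symm ((cMap K A M).rangeRestrict m))
    erw [h1, Submodule.liftQ_apply]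
  · intro ψ hψ
    ext ⟨x, hx⟩
    obtain ⟨m, rfl⟩ := hx
    have h2 : φ m = ψ ((cMap K A M).rangeRestrict m) := DFunLike.congr_fun hψ m
    have hx' : (⟨cMap K A M m, ⟨m, rfl⟩⟩ : diagSub K A M)
        = (cMap K A M).rangeRestrict m := rfl
    rw [hx', ← h2]
    show φ m = (LinearMap.ker (cMap K A M)).liftQ φ hker
      ((cMap K A M).quotKerEquivRange.symm ((cMap K A M).rangeRestrict m))
    erw [h1, Submodule.liftQ_apply]

end Diag
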